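/- arXiv:1605.00265 — 4 statements merged into one kernel-verified Lean document; each statement's English description precedes it below -/
import Mathlib

section
/- Let X ⊆ {0,1}^k be a set of rule settings of size p such that the p×p matrix F whose rows are the vectors f(x), x ∈ X, is invertible, and let β ∈ ℝ^p. Then there is a matrix maximizing the determinant over P(β) that lies in the face conv{M(x,β) : x ∈ X} if and only if for every x ∈ {0,1}^k one has λ(x,β) · (F⁻ᵀ f(x))ᵀ ψ(β)⁻¹ (F⁻ᵀ f(x)) ≤ 1, where ψ(β) is the diagonal p×p matrix whose diagonal entries are the intensities λ(x,β), x ∈ X (in the same order as the rows of F). Moreover, if these inequalities hold, then the matrix (1/p) Σ_{x∈X} M(x,β), the geometric center of the face, maximizes the determinant over P(β). -/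
open Matrix

/-- Index type for the components of the regression function of interaction order `d`:
subsets `S ⊆ {1,…,k}` with `|S| ≤ d`.  Its cardinality is `p = ∑_{i=0}^d binom(k,i)`. -/
abbrev MonIdx (k d : ℕ) := {S : Finset (Fin k) // S.card ≤ d}

/-- The regression function of interaction order `d`: the `S`-component of `f(x)` is the
square-free monomial `∏_{i ∈ S} x_i`, evaluated at the rule setting `x ∈ {0,1}^k`. -/
def regr (k d : ℕ) (x : Fin k → Bool) : MonIdx k d → ℝ :=
  fun S => ∏ i ∈ S.1, (if x i then (1 : ℝ) else 0)

/-- The intensity `λ(x,β) = exp (f(x)ᵀ β)` of the rule setting `x`. -/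
noncomputable def intensity (k d : ℕ) (β : MonIdx k d → ℝ) (x : Fin k → Bool) : ℝ :=
  Real.exp (∑ S, regr k d x S * β S)

/-- The information matrix `M(x,β) = λ(x,β) · f(x) f(x)ᵀ`. -/
noncomputable def infoMat (k d : ℕ) (β : MonIdx k d → ℝ) (x : Fin k → Bool) :
    Matrix (MonIdx k d) (MonIdx k d) ℝ :=
  intensity k d β x • Matrix.vecMulVec (regr k d x) (regr k d x)

open Filter Set


variable {n : Type*} [Fintype n] [DecidableEq n]

lemma trace_eq_sum_eigs {A : Matrix n n ℝ} (hA : A.IsHermitian) :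
    A.trace = ∑ i, hA.eigenvalues i := by
  simpa using hA.trace_eq_sum_eigenvalues

lemma psd_det_le_one [Nonempty n] {C : Matrix n n ℝ} (hC : C.PosSemidef)
    (htr : C.trace ≤ (Fintype.card n : ℝ)) : C.det ≤ 1 := by
  have hcard : 0 < Fintype.card n := Fintype.card_pos
  set p : ℝ := (Fintype.card n : ℝ) with hp
  have hp0 : (0:ℝ) < p := Nat.cast_pos.mpr hcard
  set μ : n → ℝ := hC.1.eigenvalues with hμ
  have hμ0 : ∀ i, 0 ≤ μ i := hC.eigenvalues_nonneg
  have hdet : C.det = ∏ i, μ i := by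
    have := hC.1.det_eq_prod_eigenvalues
    simpa using this
  have htr' : ∑ i, μ i ≤ p := by rw [← trace_eq_sum_eigs hC.1]; exact htr
  -- AM-GM
  have hamgm := Real.geom_mean_le_arith_mean_weighted Finset.univ
      (fun _ => p⁻¹) μ (fun _ _ => by positivity)
      (by rw [Finset.sum_const, Finset.card_univ, nsmul_eq_mul]; field_simp; exact hp.symm) (fun i _ => hμ0 i)
  have h1 : ∑ i, p⁻¹ * μ i ≤ 1 := by
    rw [← Finset.mul_sum]
    rw [inv_mul_le_iff₀ hp0, mul_one]
    exact htr'
  have h2 : (∏ i, μ i ^ p⁻¹ : ℝ) ≤ 1 := hamgm.trans h1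
  have h3 : (0:ℝ) ≤ ∏ i, μ i ^ p⁻¹ :=
    Finset.prod_nonneg fun i _ => Real.rpow_nonneg (hμ0 i) _
  have h4 : ((∏ i, μ i ^ p⁻¹ : ℝ)) ^ (p : ℝ) ≤ 1 :=
    Real.rpow_le_one h3 h2 (le_of_lt hp0)
  calc C.det = ∏ i, μ i := hdet
    _ = (∏ i, μ i ^ p⁻¹) ^ (p:ℝ) := by
        rw [← Real.finset_prod_rpow _ _ (fun i _ => Real.rpow_nonneg (hμ0 i) _)]
        refine Finset.prod_congr rfl fun i _ => ?_
        rw [← Real.rpow_mul (hμ0 i), inv_mul_cancel₀ (ne_of_gt hp0), Real.rpow_one]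
    _ ≤ 1 := by
        exact h4

lemma det_segment_eigs {C : Matrix n n ℝ} (hC : C.IsHermitian) (t : ℝ) :
    ((1-t) • (1 : Matrix n n ℝ) + t • C).det = ∏ i, (1 - t + t * hC.eigenvalues i) := by
  set U : Matrix n n ℝ := (hC.eigenvectorUnitary : Matrix n n ℝ) with hU
  have hUU : U * star U = 1 := hC.eigenvectorUnitary.2.2
  have hUU' : star U * U = 1 := hC.eigenvectorUnitary.2.1
  have key : (1-t) • (1 : Matrix n n ℝ) + t • C
      = U * (Matrix.diagonal (fun i => 1 - t + t * hC.eigenvalues i)) * star U := by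
    have hd : Matrix.diagonal (fun i => 1 - t + t * hC.eigenvalues i)
        = (1-t) • (1 : Matrix n n ℝ) + t • Matrix.diagonal (RCLike.ofReal ∘ hC.eigenvalues) := by
      ext i j
      by_cases h : i = j
      · subst h; simp [Matrix.diagonal_apply_eq, Matrix.one_apply_eq]
      · simp [Matrix.diagonal_apply_ne _ h, Matrix.one_apply_ne h]
    rw [hd, Matrix.mul_add, Matrix.add_mul]
    congr 1
    · rw [Matrix.mul_smul, Matrix.smul_mul, Matrix.mul_one, hUU]
    · rw [Matrix.mul_smul, Matrix.smul_mul]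
      congr 1
      exact hC.spectral_theorem
  rw [key, Matrix.det_mul, Matrix.det_mul]
  have : U.det * (star U).det = 1 := by rw [← Matrix.det_mul, hUU, Matrix.det_one]
  rw [mul_comm, ← mul_assoc, mul_comm ((star U).det), this, one_mul, Matrix.det_diagonal]

lemma trace_le_of_det_segment [Nonempty n] {C : Matrix n n ℝ} (hC : C.IsHermitian)
    (h : ∀ t ∈ Set.Icc (0:ℝ) 1, ((1-t) • (1 : Matrix n n ℝ) + t • C).det ≤ 1) :
    C.trace ≤ (Fintype.card n : ℝ) := by
  set μ : n → ℝ := hC.eigenvalues with hμ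
  rw [trace_eq_sum_eigs hC]
  by_contra hcon
  push_neg at hcon
  set φ : ℝ → ℝ := fun t => ∏ i, (1 - t + t * μ i) with hφ
  have hφle : ∀ t ∈ Set.Icc (0:ℝ) 1, φ t ≤ 1 := by
    intro t ht
    rw [hφ]
    simpa [det_segment_eigs hC t] using h t ht
  have hφ0 : φ 0 = 1 := by simp [hφ]
  set s : ℝ := (∑ i, μ i) - (Fintype.card n : ℝ) with hs
  have hspos : 0 < s := sub_pos.mpr hcon
  have hD : HasDerivAt φ s 0 := by
    have h1 : ∀ i ∈ Finset.univ, HasDerivAt (fun t : ℝ => 1 - t + t * μ i) (μ i - 1) 0 := by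
      intro i _
      have := ((hasDerivAt_const (0:ℝ) (1:ℝ)).sub (hasDerivAt_id 0)).add
        ((hasDerivAt_id 0).mul_const (μ i))
      have e : (fun t : ℝ => 1 - t + t * μ i) = ((fun x => 1) - id + fun y => id y * μ i) := by
        funext t; simp
      rw [e]; exact this.congr_deriv (by ring)
    have := HasDerivAt.fun_finsetProd h1
    refine this.congr_deriv ?_
    rw [hs]
    simp [Finset.sum_sub_distrib, Finset.card_univ]
  rw [hasDerivAt_iff_tendsto_slope] at hD
  have hD' : Filter.Tendsto (slope φ 0) (nhdsWithin 0 (Set.Ioi 0)) (nhds s) :=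
    hD.mono_left (nhdsWithin_mono 0 (fun x hx => ne_of_gt hx))
  have hev : ∀ᶠ t in nhdsWithin (0:ℝ) (Set.Ioi 0), 0 < slope φ 0 t :=
    hD'.eventually (eventually_gt_nhds hspos)
  have hev2 : ∀ᶠ t in nhdsWithin (0:ℝ) (Set.Ioi 0), t ∈ Set.Ioo (0:ℝ) 1 :=
    Ioo_mem_nhdsGT_of_mem ⟨le_refl 0, one_pos⟩
  obtain ⟨t, ht1, ht2⟩ := (hev.and hev2).exists
  have hslope : slope φ 0 t = (φ t - 1) / t := by
    rw [slope_def_field, hφ0]; simp [div_eq_div_iff]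
  rw [hslope] at ht1
  have : 0 < φ t - 1 := by
    have := mul_pos ht1 ht2.1
    rwa [div_mul_cancel₀ _ (ne_of_gt ht2.1)] at this
  have := hφle t ⟨le_of_lt ht2.1, le_of_lt ht2.2⟩
  linarith

lemma real_conjTranspose_eq {m l : Type*} (M : Matrix m l ℝ) : Mᴴ = Mᵀ := by
  ext i j; simp [Matrix.conjTranspose_apply]

lemma conj_psd {G B : Matrix n n ℝ} (hB : B.PosSemidef) :
    ((G⁻¹)ᵀ * B * G⁻¹).PosSemidef := by
  have := hB.conjTranspose_mul_mul_same G⁻¹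
  rwa [real_conjTranspose_eq] at this

lemma myTraceConj {G B : Matrix n n ℝ} :
    ((G⁻¹)ᵀ * B * G⁻¹).trace = ((Gᵀ * G)⁻¹ * B).trace := by
  rw [Matrix.mul_inv_rev, ← Matrix.transpose_nonsing_inv,
    Matrix.trace_mul_comm (G⁻¹ᵀ * B) G⁻¹, ← Matrix.mul_assoc]

lemma det_GTG {G : Matrix n n ℝ} : (Gᵀ * G).det = G.det ^ 2 := by
  rw [Matrix.det_mul, Matrix.det_transpose, sq]

lemma detBound [Nonempty n] {G B : Matrix n n ℝ} (hG : IsUnit G.det) (hB : B.PosSemidef)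
    (htr : ((Gᵀ * G)⁻¹ * B).trace ≤ (Fintype.card n : ℝ)) : B.det ≤ (Gᵀ * G).det := by
  have hGne : G.det ≠ 0 := hG.ne_zero
  set C := (G⁻¹)ᵀ * B * G⁻¹ with hC
  have hCpsd : C.PosSemidef := conj_psd hB
  have hCtr : C.trace ≤ (Fintype.card n : ℝ) := by rw [hC, myTraceConj]; exact htr
  have hCdet : C.det = B.det * (G.det ^ 2)⁻¹ := by
    rw [hC, Matrix.det_mul, Matrix.det_mul, Matrix.det_transpose,
      Matrix.det_nonsing_inv, Ring.inverse_eq_inv']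
    ring
  have h1 : C.det ≤ 1 := psd_det_le_one hCpsd hCtr
  have hsq : (0:ℝ) < G.det ^ 2 := by positivity
  rw [det_GTG]
  rw [hCdet] at h1
  calc B.det = B.det * (G.det ^ 2)⁻¹ * G.det ^ 2 := by field_simp
    _ ≤ 1 * G.det ^ 2 := by
        exact mul_le_mul_of_nonneg_right h1 (le_of_lt hsq)
    _ = G.det ^ 2 := one_mul _

lemma traceBound [Nonempty n] {G B : Matrix n n ℝ} (hG : IsUnit G.det) (hB : B.PosSemidef)
    (h : ∀ t ∈ Set.Icc (0:ℝ) 1, ((1-t) • (Gᵀ * G) + t • B).det ≤ (Gᵀ * G).det) :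
    ((Gᵀ * G)⁻¹ * B).trace ≤ (Fintype.card n : ℝ) := by
  have hGne : G.det ≠ 0 := hG.ne_zero
  have hGTunit : IsUnit Gᵀ.det := by rwa [Matrix.det_transpose]
  set C := (G⁻¹)ᵀ * B * G⁻¹ with hC
  have hCpsd : C.PosSemidef := conj_psd hB
  have hkey : ∀ t : ℝ, (1-t) • (Gᵀ * G) + t • B
      = Gᵀ * ((1-t) • (1 : Matrix n n ℝ) + t • C) * G := by
    intro t
    have hGC : Gᵀ * C * G = B := by
      rw [hC, Matrix.transpose_nonsing_inv]
      rw [show Gᵀ * ((Gᵀ)⁻¹ * B * G⁻¹) * G = (Gᵀ * (Gᵀ)⁻¹) * B * (G⁻¹ * G) by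
        simp only [Matrix.mul_assoc]]
      rw [Matrix.mul_nonsing_inv _ hGTunit, Matrix.nonsing_inv_mul _ hG,
        Matrix.one_mul, Matrix.mul_one]
    rw [Matrix.mul_add, Matrix.add_mul]
    congr 1
    · rw [Matrix.mul_smul, Matrix.smul_mul, Matrix.mul_one]
    · rw [Matrix.mul_smul, Matrix.smul_mul, hGC]
  have hsq : (0:ℝ) < G.det ^ 2 := by positivity
  have hseg : ∀ t ∈ Set.Icc (0:ℝ) 1, ((1-t) • (1 : Matrix n n ℝ) + t • C).det ≤ 1 := by
    intro t ht
    have := h t ht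
    rw [hkey t, Matrix.det_mul, Matrix.det_mul, det_GTG] at this
    have h2 : ((1-t) • (1 : Matrix n n ℝ) + t • C).det * G.det ^ 2 ≤ G.det ^ 2 := by
      rw [Matrix.det_transpose] at this
      calc ((1-t) • (1 : Matrix n n ℝ) + t • C).det * G.det ^ 2
          = G.det * ((1-t) • (1 : Matrix n n ℝ) + t • C).det * G.det := by ring
        _ ≤ G.det ^ 2 := this
    exact le_of_mul_le_mul_right (by rwa [one_mul]) hsq
  have := trace_le_of_det_segment hCpsd.1 hseg
  rwa [hC, myTraceConj] at this

lemma psd_comb {B1 B2 : Matrix n n ℝ} (h1 : B1.PosSemidef) (h2 : B2.PosSemidef)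
    {a b : ℝ} (ha : 0 ≤ a) (hb : 0 ≤ b) : (a • B1 + b • B2).PosSemidef := by
  constructor
  · show (a • B1 + b • B2)ᴴ = _
    rw [Matrix.conjTranspose_add, Matrix.conjTranspose_smul, Matrix.conjTranspose_smul,
      h1.1.eq, h2.1.eq, star_trivial, star_trivial]
  · exact ((h1.smul ha).add (h2.smul hb)).2

lemma trace_mul_vecMulVec (M : Matrix n n ℝ) (u : n → ℝ) :
    (M * Matrix.vecMulVec u u).trace = u ⬝ᵥ (M *ᵥ u) := by
  simp only [Matrix.trace, Matrix.diag, Matrix.mul_apply, Matrix.vecMulVec_apply,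
    dotProduct, Matrix.mulVec, Finset.mul_sum]
  refine Finset.sum_congr rfl fun i _ => Finset.sum_congr rfl fun j _ => by ring
instance (k d : ℕ) : Nonempty (MonIdx k d) := ⟨⟨∅, by simp⟩⟩

section Specific

variable {k d : ℕ} {β : MonIdx k d → ℝ}

lemma intensity_pos (x : Fin k → Bool) : 0 < intensity k d β x := Real.exp_pos _

lemma infoMat_apply (x : Fin k → Bool) (a b : MonIdx k d) :
    infoMat k d β x a b = intensity k d β x * (regr k d x a * regr k d x b) := by
  simp [infoMat, Matrix.vecMulVec_apply, smul_eq_mul]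

lemma infoMat_psd (x : Fin k → Bool) : (infoMat k d β x).PosSemidef := by
  set c := intensity k d β x with hc
  set u := regr k d x with hu
  constructor
  · show (infoMat k d β x)ᴴ = _
    ext a b
    rw [Matrix.conjTranspose_apply, infoMat_apply, infoMat_apply, star_trivial]
    ring
  · exact ((Matrix.posSemidef_vecMulVec_self_star u).smul (le_of_lt (intensity_pos (β := β) x))).2

lemma sum_infoMat_eq (e : MonIdx k d → (Fin k → Bool))
    (F : Matrix (MonIdx k d) (MonIdx k d) ℝ)
    (hF : F = Matrix.of fun i j => regr k d (e i) j) (v : MonIdx k d → ℝ) :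
    ∑ i, v i • infoMat k d β (e i)
      = Fᵀ * Matrix.diagonal (fun i => v i * intensity k d β (e i)) * F := by
  ext a b
  rw [Matrix.sum_apply]
  rw [Matrix.mul_apply]
  have : ∀ j, (Fᵀ * Matrix.diagonal (fun i => v i * intensity k d β (e i))) a j
      = F j a * (v j * intensity k d β (e j)) := by
    intro j
    rw [Matrix.mul_diagonal, Matrix.transpose_apply]
  simp only [this]
  refine Finset.sum_congr rfl fun i _ => ?_
  rw [Matrix.smul_apply, infoMat_apply, smul_eq_mul, hF]
  show v i * (intensity k d β (e i) * (regr k d (e i) a * regr k d (e i) b))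
    = regr k d (e i) a * (v i * intensity k d β (e i)) * regr k d (e i) b
  ring

lemma exists_G (F : Matrix (MonIdx k d) (MonIdx k d) ℝ) (hFunit : IsUnit F.det)
    (w : MonIdx k d → ℝ) (hw : ∀ i, 0 < w i) :
    ∃ G : Matrix (MonIdx k d) (MonIdx k d) ℝ,
      Gᵀ * G = Fᵀ * Matrix.diagonal w * F ∧ IsUnit G.det := by
  refine ⟨Matrix.diagonal (fun i => Real.sqrt (w i)) * F, ?_, ?_⟩
  · rw [Matrix.transpose_mul, Matrix.diagonal_transpose, Matrix.mul_assoc,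
      ← Matrix.mul_assoc (Matrix.diagonal _), Matrix.diagonal_mul_diagonal]
    rw [show (fun i => Real.sqrt (w i) * Real.sqrt (w i)) = w from
      funext fun i => Real.mul_self_sqrt (le_of_lt (hw i))]
    rw [Matrix.mul_assoc]
  · rw [Matrix.det_mul, Matrix.det_diagonal]
    refine (Finset.prod_ne_zero_iff.mpr fun i _ =>
      (Real.sqrt_ne_zero (le_of_lt (hw i))).mpr (ne_of_gt (hw i))).isUnit.mul hFunit

lemma inv_structure (F : Matrix (MonIdx k d) (MonIdx k d) ℝ) (hFunit : IsUnit F.det)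
    (w : MonIdx k d → ℝ) (hw : ∀ i, w i ≠ 0) :
    (Fᵀ * Matrix.diagonal w * F)⁻¹
      = F⁻¹ * Matrix.diagonal (fun i => (w i)⁻¹) * F⁻¹ᵀ := by
  apply Matrix.inv_eq_right_inv
  have h1 : F * F⁻¹ = 1 := Matrix.mul_nonsing_inv _ hFunit
  have h2 : Matrix.diagonal w * Matrix.diagonal (fun i => (w i)⁻¹) = 1 := by
    rw [Matrix.diagonal_mul_diagonal,
      show (fun i => w i * (w i)⁻¹) = fun _ => (1:ℝ) from
        funext fun i => mul_inv_cancel₀ (hw i)]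
    exact Matrix.diagonal_one
  rw [show Fᵀ * Matrix.diagonal w * F * (F⁻¹ * Matrix.diagonal (fun i => (w i)⁻¹) * F⁻¹ᵀ)
      = Fᵀ * (Matrix.diagonal w * ((F * F⁻¹) * (Matrix.diagonal (fun i => (w i)⁻¹) * F⁻¹ᵀ)))
      from by simp only [Matrix.mul_assoc]]
  rw [h1, Matrix.one_mul, ← Matrix.mul_assoc (Matrix.diagonal w), h2, Matrix.one_mul,
    ← Matrix.transpose_mul, Matrix.nonsing_inv_mul _ hFunit, Matrix.transpose_one]

lemma trace_formula (F : Matrix (MonIdx k d) (MonIdx k d) ℝ) (hFunit : IsUnit F.det)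
    (w : MonIdx k d → ℝ) (hw : ∀ i, w i ≠ 0) (x : Fin k → Bool) :
    ((Fᵀ * Matrix.diagonal w * F)⁻¹ * infoMat k d β x).trace
      = intensity k d β x * ((F⁻¹ᵀ *ᵥ regr k d x) ⬝ᵥ
          (Matrix.diagonal (fun i => (w i)⁻¹) *ᵥ (F⁻¹ᵀ *ᵥ regr k d x))) := by
  set u := regr k d x with hu
  rw [infoMat, Matrix.mul_smul, Matrix.trace_smul, smul_eq_mul]
  congr 1
  rw [trace_mul_vecMulVec, inv_structure F hFunit w hw]
  rw [← Matrix.mulVec_mulVec, ← Matrix.mulVec_mulVec]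
  rw [Matrix.dotProduct_mulVec]
  congr 1
  exact (Matrix.mulVec_transpose F⁻¹ u).symm

lemma single_vec (e : MonIdx k d → (Fin k → Bool))
    (F : Matrix (MonIdx k d) (MonIdx k d) ℝ)
    (hF : F = Matrix.of fun i j => regr k d (e i) j) (hFunit : IsUnit F.det)
    (j : MonIdx k d) :
    F⁻¹ᵀ *ᵥ regr k d (e j) = Pi.single j 1 := by
  have h1 : regr k d (e j) = Fᵀ *ᵥ Pi.single j 1 := by
    ext a
    rw [Matrix.mulVec_single]
    show regr k d (e j) a = Fᵀ a j * 1
    rw [mul_one, Matrix.transpose_apply, hF]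
    rfl
  rw [h1, Matrix.mulVec_mulVec, ← Matrix.transpose_mul,
    Matrix.mul_nonsing_inv _ hFunit, Matrix.transpose_one, Matrix.one_mulVec]

lemma single_dot (u : MonIdx k d → ℝ) (j : MonIdx k d) :
    (Pi.single j (1:ℝ)) ⬝ᵥ (Matrix.diagonal u *ᵥ Pi.single j 1) = u j := by
  simp [Matrix.mulVec_diagonal, dotProduct, Pi.single_apply]

lemma infoMat_inj (e : MonIdx k d → (Fin k → Bool))
    (F : Matrix (MonIdx k d) (MonIdx k d) ℝ)
    (hF : F = Matrix.of fun i j => regr k d (e i) j) (hFunit : IsUnit F.det) :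
    Function.Injective (fun i => infoMat k d β (e i)) := by
  intro i j h
  simp only at h
  by_contra hne
  set i0 : MonIdx k d := ⟨∅, by simp⟩ with hi0
  have hreg1 : ∀ y : Fin k → Bool, regr k d y i0 = 1 := fun y => Finset.prod_empty
  have hlam : intensity k d β (e i) = intensity k d β (e j) := by
    have : infoMat k d β (e i) i0 i0 = infoMat k d β (e j) i0 i0 := by rw [h]
    simp only [infoMat_apply, hreg1, mul_one, one_mul] at this
    exact this
  have hrow : F i = F j := by
    funext a
    have : infoMat k d β (e i) i0 a = infoMat k d β (e j) i0 a := by rw [h]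
    simp only [infoMat_apply, hreg1, one_mul] at this
    rw [hlam] at this
    have h2 : regr k d (e i) a = regr k d (e j) a :=
      mul_left_cancel₀ (ne_of_gt (intensity_pos (β := β) (e j))) this
    rw [hF]
    exact h2
  exact hFunit.ne_zero (Matrix.det_zero_of_row_eq hne hrow)

end Specific

/-- **Kiefer–Wolfowitz equivalence theorem.**
Let `X ⊆ {0,1}^k` have size `p` (encoded by the injective enumeration
`e : MonIdx k d → (Fin k → Bool)`, whose domain has cardinality `p`), such that the `p × p`
matrix `F` with rows `f(x)`, `x ∈ X`, is invertible, and let `β ∈ ℝ^p`.  Then there is a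
matrix maximizing the determinant over `P(β) = conv {M(x,β) : x ∈ {0,1}^k}` lying in the face
`conv {M(x,β) : x ∈ X}` if and only if for all `x ∈ {0,1}^k`
`λ(x,β) · (F⁻ᵀ f(x))ᵀ ψ(β)⁻¹ (F⁻ᵀ f(x)) ≤ 1`, where `ψ(β)` is the diagonal matrix with
diagonal entries `λ(x,β)`, `x ∈ X` (in the order of the rows of `F`).  Moreover, if these
inequalities hold, then the geometric center `(1/p) ∑_{x ∈ X} M(x,β)` of the face maximizes
the determinant over `P(β)`. -/
theorem kiefer_wolfowitz_saturated (k d : ℕ) (hk : 0 < k) (hd : 0 < d) (hdk : d ≤ k)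
    (β : MonIdx k d → ℝ)
    (e : MonIdx k d → (Fin k → Bool)) (he : Function.Injective e)
    (F : Matrix (MonIdx k d) (MonIdx k d) ℝ)
    (hF : F = Matrix.of fun i j => regr k d (e i) j)
    (hFunit : IsUnit F.det)
    (ψinv : Matrix (MonIdx k d) (MonIdx k d) ℝ)
    (hψinv : ψinv = Matrix.diagonal fun i => (intensity k d β (e i))⁻¹) :
    ((∃ A ∈ convexHull ℝ (Set.range fun i => infoMat k d β (e i)),
        ∀ B ∈ convexHull ℝ (Set.range (infoMat k d β)), B.det ≤ A.det) ↔
      (∀ x : Fin k → Bool,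
        intensity k d β x *
          ((F⁻¹ᵀ *ᵥ regr k d x) ⬝ᵥ (ψinv *ᵥ (F⁻¹ᵀ *ᵥ regr k d x))) ≤ 1)) ∧
    ((∀ x : Fin k → Bool,
        intensity k d β x *
          ((F⁻¹ᵀ *ᵥ regr k d x) ⬝ᵥ (ψinv *ᵥ (F⁻¹ᵀ *ᵥ regr k d x))) ≤ 1) →
      ((Fintype.card (MonIdx k d) : ℝ)⁻¹ • ∑ i, infoMat k d β (e i)) ∈
          convexHull ℝ (Set.range fun i => infoMat k d β (e i)) ∧
        ∀ B ∈ convexHull ℝ (Set.range (infoMat k d β)),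
          B.det ≤ ((Fintype.card (MonIdx k d) : ℝ)⁻¹ • ∑ i, infoMat k d β (e i)).det) := by
  classical
  set p : ℕ := Fintype.card (MonIdx k d) with hpdef
  have hp0 : 0 < p := Fintype.card_pos
  have hpR : (0:ℝ) < (p:ℝ) := Nat.cast_pos.mpr hp0
  set lam : MonIdx k d → ℝ := fun i => intensity k d β (e i) with hlam
  have hlampos : ∀ i, 0 < lam i := fun i => intensity_pos _
  set wstar : MonIdx k d → ℝ := fun i => (p:ℝ)⁻¹ * lam i with hwstar
  have hwpos : ∀ i, 0 < wstar i := fun i => mul_pos (inv_pos.mpr hpR) (hlampos i)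
  have hwne : ∀ i, wstar i ≠ 0 := fun i => (hwpos i).ne'
  set Astar : Matrix (MonIdx k d) (MonIdx k d) ℝ :=
    (p:ℝ)⁻¹ • ∑ i, infoMat k d β (e i) with hAstar
  have hAsum : Astar = ∑ i, (p:ℝ)⁻¹ • infoMat k d β (e i) := Finset.smul_sum
  have hAFD : Astar = Fᵀ * Matrix.diagonal wstar * F := by
    rw [hAsum, sum_infoMat_eq e F hF (fun _ => (p:ℝ)⁻¹)]
  obtain ⟨G, hGA, hGdet⟩ := exists_G F hFunit wstar hwpos
  have htr : ∀ x : Fin k → Bool, (Astar⁻¹ * infoMat k d β x).trace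
      = (p:ℝ) * (intensity k d β x *
          ((F⁻¹ᵀ *ᵥ regr k d x) ⬝ᵥ (ψinv *ᵥ (F⁻¹ᵀ *ᵥ regr k d x)))) := by
    intro x
    rw [hAFD, trace_formula F hFunit wstar hwne x]
    have hdiag : Matrix.diagonal (fun i => (wstar i)⁻¹) = (p:ℝ) • ψinv := by
      have hfun : (fun i => (wstar i)⁻¹)
          = (p:ℝ) • (fun i => (intensity k d β (e i))⁻¹) := by
        funext i
        show ((p:ℝ)⁻¹ * lam i)⁻¹ = (p:ℝ) • (lam i)⁻¹
        rw [smul_eq_mul, mul_inv, inv_inv]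
      rw [hψinv, hfun, Matrix.diagonal_smul]
    rw [hdiag, Matrix.smul_mulVec, dotProduct_smul, smul_eq_mul]
    ring
  have hmem : Astar ∈ convexHull ℝ (Set.range fun i => infoMat k d β (e i)) := by
    rw [hAsum]
    refine (convex_convexHull ℝ _).sum_mem (fun i _ => by positivity) ?_
      (fun i _ => subset_convexHull ℝ _ (Set.mem_range_self i))
    rw [Finset.sum_const, Finset.card_univ, nsmul_eq_mul, mul_inv_cancel₀ (ne_of_gt hpR)]
  have hFace_sub : Set.range (fun i => infoMat k d β (e i)) ⊆ Set.range (infoMat k d β) := by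
    rintro _ ⟨i, rfl⟩; exact ⟨e i, rfl⟩
  have hAstarP : Astar ∈ convexHull ℝ (Set.range (infoMat k d β)) :=
    convexHull_mono hFace_sub hmem
  have hdetAstar_pos : 0 < Astar.det := by
    rw [hAFD, ← hGA, det_GTG]
    exact lt_of_le_of_ne (sq_nonneg _) (Ne.symm (pow_ne_zero 2 hGdet.ne_zero))
  -- backward direction and the "moreover" part
  have hback : (∀ x : Fin k → Bool,
      intensity k d β x *
        ((F⁻¹ᵀ *ᵥ regr k d x) ⬝ᵥ (ψinv *ᵥ (F⁻¹ᵀ *ᵥ regr k d x))) ≤ 1) →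
      ∀ B ∈ convexHull ℝ (Set.range (infoMat k d β)), B.det ≤ Astar.det := by
    intro hcond B hB
    have hsub : Set.range (infoMat k d β)
        ⊆ {B : Matrix (MonIdx k d) (MonIdx k d) ℝ |
            B.PosSemidef ∧ (Astar⁻¹ * B).trace ≤ (p:ℝ)} := by
      rintro _ ⟨x, rfl⟩
      refine ⟨infoMat_psd x, ?_⟩
      rw [htr x]
      calc (p:ℝ) * _ ≤ (p:ℝ) * 1 :=
            mul_le_mul_of_nonneg_left (hcond x) (le_of_lt hpR)
        _ = (p:ℝ) := mul_one _
    have hconv : Convex ℝ {B : Matrix (MonIdx k d) (MonIdx k d) ℝ |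
        B.PosSemidef ∧ (Astar⁻¹ * B).trace ≤ (p:ℝ)} := by
      rintro B1 ⟨h1p, h1t⟩ B2 ⟨h2p, h2t⟩ a b ha hb hab
      refine ⟨psd_comb h1p h2p ha hb, ?_⟩
      rw [Matrix.mul_add, Matrix.mul_smul, Matrix.mul_smul, Matrix.trace_add,
        Matrix.trace_smul, Matrix.trace_smul, smul_eq_mul, smul_eq_mul]
      calc a * (Astar⁻¹ * B1).trace + b * (Astar⁻¹ * B2).trace
          ≤ a * (p:ℝ) + b * (p:ℝ) :=
            add_le_add (mul_le_mul_of_nonneg_left h1t ha)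
              (mul_le_mul_of_nonneg_left h2t hb)
        _ = (p:ℝ) := by rw [← add_mul, hab, one_mul]
    obtain ⟨hBpsd, hBtr⟩ := convexHull_min hsub hconv hB
    have hres := detBound hGdet hBpsd (by rw [hGA, ← hAFD]; exact hBtr)
    rwa [hGA, ← hAFD] at hres
  -- forward direction
  have hfwd : (∃ A ∈ convexHull ℝ (Set.range fun i => infoMat k d β (e i)),
      ∀ B ∈ convexHull ℝ (Set.range (infoMat k d β)), B.det ≤ A.det) →
      ∀ x : Fin k → Bool,
        intensity k d β x *
          ((F⁻¹ᵀ *ᵥ regr k d x) ⬝ᵥ (ψinv *ᵥ (F⁻¹ᵀ *ᵥ regr k d x))) ≤ 1 := by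
    rintro ⟨A, hAface, hAmax⟩
    have hrange : (Set.range fun i => infoMat k d β (e i))
        = ↑(Finset.image (fun i => infoMat k d β (e i)) Finset.univ) := by
      rw [Finset.coe_image, Finset.coe_univ, Set.image_univ]
    have hAface' := hAface
    rw [hrange] at hAface'
    obtain ⟨wf, hw0, hw1, hwsum⟩ := Finset.mem_convexHull'.mp hAface'
    have hinj : Function.Injective (fun i => infoMat k d β (e i)) :=
      infoMat_inj e F hF hFunit
    set v : MonIdx k d → ℝ := fun i => wf (infoMat k d β (e i)) with hv
    have hsum1 : ∑ i, v i = 1 := by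
      rw [← hw1]
      exact (Finset.sum_image (fun i _ j _ h => hinj h)).symm
    have hsumA : ∑ i, v i • infoMat k d β (e i) = A := by
      rw [← hwsum]
      exact (Finset.sum_image (f := fun B : Matrix (MonIdx k d) (MonIdx k d) ℝ => wf B • B)
        (g := fun i => infoMat k d β (e i)) (fun i _ j _ h => hinj h)).symm
    have hv0 : ∀ i, 0 ≤ v i := fun i =>
      hw0 _ (Finset.mem_image_of_mem _ (Finset.mem_univ i))
    have hAFD' : A = Fᵀ * Matrix.diagonal (fun i => v i * lam i) * F := by
      rw [← hsumA, sum_infoMat_eq e F hF v]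
    have hAinP : A ∈ convexHull ℝ (Set.range (infoMat k d β)) :=
      convexHull_mono hFace_sub hAface
    have hdetA_pos : 0 < A.det := lt_of_lt_of_le hdetAstar_pos (hAmax Astar hAstarP)
    have hF2 : (0:ℝ) < F.det ^ 2 :=
      lt_of_le_of_ne (sq_nonneg _) (Ne.symm (pow_ne_zero 2 hFunit.ne_zero))
    have hdetA : A.det = F.det ^ 2 * ∏ i, (v i * lam i) := by
      rw [hAFD', Matrix.det_mul, Matrix.det_mul, Matrix.det_transpose,
        Matrix.det_diagonal, sq]
      ring
    have hprodpos : 0 < ∏ i, (v i * lam i) := by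
      rw [hdetA] at hdetA_pos
      nlinarith [hdetA_pos, hF2]
    have hwpos' : ∀ i, 0 < v i * lam i := by
      intro i
      rcases lt_or_eq_of_le (mul_nonneg (hv0 i) (le_of_lt (hlampos i))) with h | h
      · exact h
      · exfalso
        have : (∏ i, (v i * lam i)) = 0 :=
          Finset.prod_eq_zero (Finset.mem_univ i) h.symm
        rw [this] at hprodpos
        exact lt_irrefl 0 hprodpos
    have hvpos : ∀ i, 0 < v i := by
      intro i
      rcases lt_or_eq_of_le (hv0 i) with h | h
      · exact h
      · exfalso
        have := hwpos' i
        rw [← h, zero_mul] at this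
        exact lt_irrefl 0 this
    obtain ⟨G', hG'A, hG'det⟩ := exists_G F hFunit (fun i => v i * lam i) hwpos'
    have hseg : ∀ y : Fin k → Bool,
        ((Fᵀ * Matrix.diagonal (fun i => v i * lam i) * F)⁻¹ * infoMat k d β y).trace
          ≤ (p:ℝ) := by
      intro y
      have hsegdet : ∀ t ∈ Set.Icc (0:ℝ) 1,
          ((1-t) • (G'ᵀ * G') + t • infoMat k d β y).det ≤ (G'ᵀ * G').det := by
        intro t ht
        have hcomb : (1-t) • A + t • infoMat k d β y
            ∈ convexHull ℝ (Set.range (infoMat k d β)) :=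
          (convex_convexHull ℝ _) hAinP
            (subset_convexHull ℝ _ ⟨y, rfl⟩)
            (by linarith [ht.2]) ht.1 (by ring)
        have hm := hAmax _ hcomb
        rw [hG'A, ← hAFD']
        exact hm
      have hres := traceBound hG'det (infoMat_psd y) hsegdet
      rwa [hG'A] at hres
    have hvge : ∀ j, (p:ℝ)⁻¹ ≤ v j := by
      intro j
      have h1 := hseg (e j)
      rw [trace_formula F hFunit _ (fun i => (hwpos' i).ne') (e j),
        single_vec e F hF hFunit j, single_dot] at h1
      have h2 : (v j)⁻¹ ≤ (p:ℝ) := by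
        rwa [mul_inv, show lam j * ((v j)⁻¹ * (lam j)⁻¹)
            = (v j)⁻¹ * (lam j * (lam j)⁻¹) from by ring,
          mul_inv_cancel₀ (ne_of_gt (hlampos j)), mul_one] at h1
      have h3 := inv_anti₀ (inv_pos.mpr (hvpos j)) h2
      rwa [inv_inv] at h3
    have hveq : ∀ j, v j = (p:ℝ)⁻¹ := by
      have hsums : (∑ _i : MonIdx k d, (p:ℝ)⁻¹) = ∑ i, v i := by
        rw [hsum1, Finset.sum_const, Finset.card_univ, nsmul_eq_mul,
          mul_inv_cancel₀ (ne_of_gt hpR)]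
      intro j
      exact ((Finset.sum_eq_sum_iff_of_le (fun i _ => hvge i)).mp hsums j
        (Finset.mem_univ j)).symm
    intro x
    have h1 := hseg x
    have hfun : (fun i => v i * lam i) = wstar := by
      funext i
      rw [hveq i]
    rw [hfun, ← hAFD, htr x] at h1
    by_contra hcon
    push_neg at hcon
    nlinarith [h1, hpR, hcon]
  exact ⟨⟨hfwd, fun hc => ⟨Astar, hmem, hback hc⟩⟩, fun hc => ⟨hmem, hback hc⟩⟩
end

section
/- Let X ⊆ {0,1}^k be a set of rule settings of size p such that the p×p matrix F whose rows are the vectors f(x), x ∈ X, is invertible, and let β ∈ ℝ^p. Then for every choice of nonnegative weights (w_x)_{x∈X} with Σ_{x∈X} w_x = 1 one has det(Σ_{x∈X} w_x M(x,β)) = det(F)² · ∏_{x∈X} (w_x λ(x,β)), and consequently the determinant function attains its maximum over the face conv{M(x,β) : x ∈ X} exactly at the geometric center (1/p) Σ_{x∈X} M(x,β), where the maximal value is p^{-p} det(F)² ∏_{x∈X} λ(x,β) > 0. -/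
open Matrix

lemma amgm_aux {ι : Type*} [Fintype ι] [Nonempty ι] (w : ι → ℝ) (hw : ∀ i, 0 ≤ w i)
    (hw1 : ∑ i, w i = 1) :
    ∏ i, w i ≤ ((Fintype.card ι : ℝ) ^ Fintype.card ι)⁻¹ ∧
    (∏ i, w i = ((Fintype.card ι : ℝ) ^ Fintype.card ι)⁻¹ ↔
      w = fun _ => (Fintype.card ι : ℝ)⁻¹) := by
  set n := Fintype.card ι with hn
  have hn0 : 0 < n := Fintype.card_pos
  have hnR : (0:ℝ) < n := by exact_mod_cast hn0
  have hpow : ((n:ℝ) ^ n)⁻¹ = ((n:ℝ)⁻¹) ^ n := by rw [inv_pow]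
  have hposval : (0:ℝ) < ((n:ℝ) ^ n)⁻¹ := by positivity
  by_cases hz : ∃ j, w j = 0
  · obtain ⟨j, hj⟩ := hz
    have hprod : ∏ i, w i = 0 := Finset.prod_eq_zero (Finset.mem_univ j) hj
    refine ⟨by rw [hprod]; exact hposval.le, ?_⟩
    constructor
    · intro h; rw [hprod] at h; exact absurd h.symm hposval.ne'
    · intro h; exfalso
      have := congrFun h j
      rw [hj] at this
      exact (inv_pos.mpr hnR).ne (by rw [this])
  · push_neg at hz
    have hwpos : ∀ i, 0 < w i := fun i => lt_of_le_of_ne (hw i) (Ne.symm (hz i))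
    have hv1 : ∑ _i : ι, (n:ℝ)⁻¹ = 1 := by
      rw [Finset.sum_const, Finset.card_univ, ← hn, nsmul_eq_mul, mul_inv_cancel₀ hnR.ne']
    have hcenter : ∑ i : ι, (n:ℝ)⁻¹ • w i = (n:ℝ)⁻¹ := by
      simp only [smul_eq_mul, ← Finset.mul_sum, hw1, mul_one]
    have hmem : ∀ i ∈ (Finset.univ : Finset ι), w i ∈ Set.Ioi (0:ℝ) := fun i _ => hwpos i
    have h0 : ∀ i ∈ (Finset.univ : Finset ι), (0:ℝ) < (n:ℝ)⁻¹ := fun _ _ => inv_pos.mpr hnR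
    have hjensen := strictConcaveOn_log_Ioi.concaveOn.le_map_sum
      (fun i _ => (h0 i (Finset.mem_univ i)).le) hv1 hmem
    rw [hcenter] at hjensen
    -- ∑ (n)⁻¹ • log (w i) ≤ log (n)⁻¹
    have hsum_smul : ∀ y : ι → ℝ, ∑ i : ι, (n:ℝ)⁻¹ • y i = (n:ℝ)⁻¹ * ∑ i, y i := by
      intro y; simp [smul_eq_mul, Finset.mul_sum]
    have hprodexp : ∏ i, w i = Real.exp (∑ i, Real.log (w i)) := by
      rw [Real.exp_sum]
      exact (Finset.prod_congr rfl fun i _ => (Real.exp_log (hwpos i)).symm)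
    have hrhsexp : ((n:ℝ) ^ n)⁻¹ = Real.exp ((n:ℝ) * Real.log (n:ℝ)⁻¹) := by
      rw [hpow, ← Real.log_pow, Real.exp_log (by positivity)]
    constructor
    · rw [hprodexp, hrhsexp]
      apply Real.exp_le_exp.mpr
      have := hjensen
      rw [hsum_smul] at this
      calc ∑ i, Real.log (w i) = (n:ℝ) * ((n:ℝ)⁻¹ * ∑ i, Real.log (w i)) := by
            field_simp
        _ ≤ (n:ℝ) * Real.log (n:ℝ)⁻¹ := by
            apply mul_le_mul_of_nonneg_left this hnR.le
    · rw [hprodexp, hrhsexp, Real.exp_eq_exp]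
      have key := strictConcaveOn_log_Ioi.map_sum_eq_iff h0 hv1 hmem
      rw [hcenter] at key
      constructor
      · intro h
        have heq : Real.log ((n:ℝ)⁻¹) = ∑ i : ι, (n:ℝ)⁻¹ • Real.log (w i) := by
          rw [hsum_smul, h]; field_simp
        funext j
        exact key.mp heq j (Finset.mem_univ j)
      · intro h
        have : ∀ j ∈ (Finset.univ : Finset ι), w j = (n:ℝ)⁻¹ := fun j _ => congrFun h j
        have heq := key.mpr this
        rw [hsum_smul] at heq
        rw [heq]
        field_simp


set_option maxHeartbeats 1000000 in
/-- Let `X ⊆ {0,1}^k` have size `p` (encoded by the injective enumeration `e`, whose domain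
has cardinality `p`), with the matrix `F` of rows `f(x)`, `x ∈ X`, invertible, and let
`β ∈ ℝ^p`.  For any nonnegative weights `(w_x)_{x∈X}` summing to `1`,
`det (∑_{x∈X} w_x M(x,β)) = det(F)² ∏_{x∈X} (w_x λ(x,β))`; consequently the determinant
attains its maximum over the face `conv {M(x,β) : x ∈ X}` exactly at the geometric center
`(1/p) ∑_{x∈X} M(x,β)`, the maximal value being `p^{-p} det(F)² ∏_{x∈X} λ(x,β) > 0`. -/
theorem det_on_saturated_face (k d : ℕ) (hk : 0 < k) (hd : 0 < d) (hdk : d ≤ k)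
    (β : MonIdx k d → ℝ)
    (e : MonIdx k d → (Fin k → Bool)) (he : Function.Injective e)
    (F : Matrix (MonIdx k d) (MonIdx k d) ℝ)
    (hF : F = Matrix.of fun i j => regr k d (e i) j)
    (hFunit : IsUnit F.det)
    (p : ℕ) (hp : p = Fintype.card (MonIdx k d))
    (maxval : ℝ)
    (hmax : maxval = ((p : ℝ) ^ p)⁻¹ * F.det ^ 2 * ∏ i, intensity k d β (e i))
    (w : MonIdx k d → ℝ) (hw : ∀ i, 0 ≤ w i) (hw1 : ∑ i, w i = 1) :
    (∑ i, w i • infoMat k d β (e i)).det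
        = F.det ^ 2 * ∏ i, (w i * intensity k d β (e i)) ∧
    (∑ i, w i • infoMat k d β (e i)).det ≤ maxval ∧
    ((∑ i, w i • infoMat k d β (e i)).det = maxval ↔ w = fun _ => (p : ℝ)⁻¹) ∧
    0 < maxval := by
  have inst : Nonempty (MonIdx k d) := ⟨⟨∅, by simp⟩⟩
  set c : MonIdx k d → ℝ := fun i => w i * intensity k d β (e i) with hc
  have key : (∑ i, w i • infoMat k d β (e i)) = Fᵀ * Matrix.diagonal c * F := by
    ext a b
    rw [Matrix.sum_apply]
    rw [Matrix.mul_apply]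
    apply Finset.sum_congr rfl
    intro i _
    rw [Matrix.mul_diagonal, Matrix.transpose_apply, hF]
    simp only [Matrix.smul_apply, infoMat, Matrix.vecMulVec_apply, Matrix.of_apply,
      smul_eq_mul, hc]
    ring
  have hdet : (∑ i, w i • infoMat k d β (e i)).det
      = F.det ^ 2 * ∏ i, (w i * intensity k d β (e i)) := by
    rw [key, Matrix.det_mul, Matrix.det_mul, Matrix.det_diagonal, Matrix.det_transpose]
    ring
  have hlampos : ∀ i, 0 < intensity k d β (e i) := fun i => Real.exp_pos _
  have hlamprod : 0 < ∏ i, intensity k d β (e i) := Finset.prod_pos fun i _ => hlampos i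
  have hdetF : F.det ≠ 0 := hFunit.ne_zero
  have hdetsq : 0 < F.det ^ 2 := by positivity
  have hC : 0 < F.det ^ 2 * ∏ i, intensity k d β (e i) := by positivity
  have hprodsplit : ∏ i, (w i * intensity k d β (e i))
      = (∏ i, intensity k d β (e i)) * ∏ i, w i := by
    rw [Finset.prod_mul_distrib]; ring
  obtain ⟨hle, hiff⟩ := amgm_aux w hw hw1
  rw [← hp] at hle hiff
  have hmaxpos : 0 < maxval := by
    rw [hmax]
    have hp0 : 0 < p := by rw [hp]; exact Fintype.card_pos
    have : (0:ℝ) < ((p:ℝ)^p)⁻¹ := by positivity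
    positivity
  refine ⟨hdet, ?_, ?_, hmaxpos⟩
  · rw [hdet, hmax, hprodsplit]
    calc F.det ^ 2 * ((∏ i, intensity k d β (e i)) * ∏ i, w i)
        ≤ F.det ^ 2 * ((∏ i, intensity k d β (e i)) * ((p:ℝ)^p)⁻¹) := by
          apply mul_le_mul_of_nonneg_left _ (le_of_lt hdetsq)
          exact mul_le_mul_of_nonneg_left hle hlamprod.le
      _ = ((p:ℝ)^p)⁻¹ * F.det ^ 2 * ∏ i, intensity k d β (e i) := by ring
  · rw [hdet, hmax, hprodsplit, ← hiff]
    constructor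
    · intro h
      have h2 : (F.det ^ 2 * ∏ i, intensity k d β (e i)) * (∏ i, w i)
          = (F.det ^ 2 * ∏ i, intensity k d β (e i)) * ((p:ℝ)^p)⁻¹ := by
        linear_combination h
      exact mul_left_cancel₀ hC.ne' h2
    · intro h; rw [h]; ring
end

section
/- For the corner design there always exist feasible parameters: there exists β ∈ ℝ^p such that for every x ∈ {0,1}^k one has λ(x,β) · (F⁻ᵀ f(x))ᵀ ψ(β)⁻¹ (F⁻ᵀ f(x)) ≤ 1, where F is the p×p matrix whose rows are the vectors f(y) for the p rule settings y ∈ {0,1}^k with Hamming weight |y|₁ ≤ d, and ψ(β) is the diagonal p×p matrix whose diagonal entries are the intensities λ(y,β) of these same rule settings (in the same order). In other words, there always exist parameters β at which the corner design is D-optimal. -/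
open Matrix

/-- The enumeration of the `p` rule settings of Hamming weight `≤ d` (the support of the
corner design): the subset `S` with `|S| ≤ d` corresponds to its indicator vector. -/
def cornerPt (k d : ℕ) (S : MonIdx k d) : Fin k → Bool := fun i => decide (i ∈ S.1)

namespace CornerAux

/-- The support (as a finite set) of a rule setting. -/
def supp {k : ℕ} (x : Fin k → Bool) : Finset (Fin k) :=
  Finset.univ.filter fun i => x i = true

lemma supp_cornerPt (k d : ℕ) (S : MonIdx k d) : supp (cornerPt k d S) = S.1 := by
  ext i; simp [supp, cornerPt]

lemma eq_cornerPt {k d : ℕ} (x : Fin k → Bool) (h : (supp x).card ≤ d) :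
    x = cornerPt k d ⟨supp x, h⟩ := by
  funext i
  cases hx : x i <;> simp [cornerPt, supp, hx]

lemma regr_eq {k : ℕ} (d : ℕ) (x : Fin k → Bool) (S : MonIdx k d) :
    regr k d x S = if S.1 ⊆ supp x then 1 else 0 := by
  unfold regr
  split
  · rename_i hsub
    exact Finset.prod_eq_one fun i hi => by
      have hx := (Finset.mem_filter.mp (hsub hi)).2
      simp [hx]
  · rename_i hsub
    obtain ⟨i, hi, hna⟩ := Finset.not_subset.mp hsub
    refine Finset.prod_eq_zero hi ?_
    have hx : x i ≠ true := fun hx => hna (Finset.mem_filter.mpr ⟨Finset.mem_univ _, hx⟩)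
    simp [hx]

/-- Number of monomial indices supported on `A`. -/
def nsub (k d : ℕ) (A : Finset (Fin k)) : ℕ :=
  (Finset.univ.filter fun S : MonIdx k d => S.1 ⊆ A).card

lemma sum_regr {k d : ℕ} (x : Fin k → Bool) :
    (∑ S, regr k d x S) = (nsub k d (supp x) : ℝ) := by
  simp only [regr_eq]
  rw [Finset.sum_boole]
  rfl

lemma intensity_const {k d : ℕ} (M : ℝ) (x : Fin k → Bool) :
    intensity k d (fun _ => -M) x = Real.exp (-(M * (nsub k d (supp x) : ℝ))) := by
  unfold intensity
  congr 1
  rw [← Finset.sum_mul, sum_regr]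
  ring

lemma nsub_eq (k d : ℕ) (A : Finset (Fin k)) :
    nsub k d A = (A.powerset.filter fun T => T.card ≤ d).card := by
  unfold nsub
  refine Finset.card_bij (fun S _ => S.1) ?_ ?_ ?_
  · intro S hS
    simp only [Finset.mem_filter, Finset.mem_powerset] at hS ⊢
    exact ⟨hS.2, S.2⟩
  · intro S₁ _ S₂ _ h
    exact Subtype.ext h
  · intro T hT
    simp only [Finset.mem_filter, Finset.mem_powerset] at hT
    exact ⟨⟨T, hT.2⟩, Finset.mem_filter.mpr ⟨Finset.mem_univ _, hT.1⟩, rfl⟩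

lemma nsub_lt {k d : ℕ} (hd : 0 < d) {A B : Finset (Fin k)}
    (hB : B.card ≤ d) (hA : d < A.card) : nsub k d B < nsub k d A := by
  have hBeq : nsub k d B ≤ 2 ^ d := by
    rw [nsub_eq, Finset.filter_true_of_mem (fun T hT =>
      le_trans (Finset.card_le_card (Finset.mem_powerset.mp hT)) hB),
      Finset.card_powerset]
    exact Nat.pow_le_pow_right (by norm_num) hB
  have hAge : 2 ^ d + 1 ≤ nsub k d A := by
    obtain ⟨A', hA'sub, hA'card⟩ := Finset.exists_subset_card_eq hA.le
    have hss : A' ⊂ A := hA'sub.ssubset_of_ne (by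
      intro h; rw [h] at hA'card; omega)
    obtain ⟨i, hiA, hiA'⟩ := Finset.exists_of_ssubset hss
    have hsub : insert {i} A'.powerset ⊆ A.powerset.filter fun T => T.card ≤ d := by
      intro T hT
      rcases Finset.mem_insert.mp hT with h | h
      · subst h
        refine Finset.mem_filter.mpr ⟨Finset.mem_powerset.mpr ?_, by rw [Finset.card_singleton]; exact hd⟩
        simpa using hiA
      · refine Finset.mem_filter.mpr ⟨Finset.mem_powerset.mpr
          ((Finset.mem_powerset.mp h).trans hA'sub), ?_⟩
        exact le_trans (Finset.card_le_card (Finset.mem_powerset.mp h)) (le_of_eq hA'card)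
    have hnotmem : ({i} : Finset (Fin k)) ∉ A'.powerset := by
      simpa using hiA'
    calc 2 ^ d + 1 = (insert {i} A'.powerset).card := by
          rw [Finset.card_insert_of_notMem hnotmem, Finset.card_powerset, hA'card]
      _ ≤ _ := Finset.card_le_card hsub
    |>.trans_eq (nsub_eq k d A).symm
  omega

lemma corner_case {k d : ℕ} (F : Matrix (MonIdx k d) (MonIdx k d) ℝ)
    (hF : F = Matrix.of fun i j => regr k d (cornerPt k d i) j)
    (hdet : IsUnit F.det) (β : MonIdx k d → ℝ) (S₀ : MonIdx k d) :
    intensity k d β (cornerPt k d S₀) *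
      ((F⁻¹ᵀ *ᵥ regr k d (cornerPt k d S₀)) ⬝ᵥ
        (Matrix.diagonal (fun i => (intensity k d β (cornerPt k d i))⁻¹) *ᵥ
          (F⁻¹ᵀ *ᵥ regr k d (cornerPt k d S₀)))) = 1 := by
  have hv : regr k d (cornerPt k d S₀) = Fᵀ *ᵥ Pi.single S₀ 1 := by
    funext T
    rw [Matrix.mulVec_single_one, hF]
    rfl
  have h1 : F⁻¹ᵀ *ᵥ regr k d (cornerPt k d S₀) = Pi.single S₀ 1 := by
    rw [hv, Matrix.mulVec_mulVec, ← Matrix.transpose_mul,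
      Matrix.mul_nonsing_inv F hdet, Matrix.transpose_one, Matrix.one_mulVec]
  rw [h1, Matrix.diagonal_mulVec_single, dotProduct_single, Pi.single_eq_same,
    mul_one, one_mul]
  exact mul_inv_cancel₀ (Real.exp_ne_zero _)

end CornerAux

/-- For the corner design there always exist feasible parameters: there is a `β ∈ ℝ^p` such
that for every `x ∈ {0,1}^k` one has `λ(x,β) · (F⁻ᵀ f(x))ᵀ ψ(β)⁻¹ (F⁻ᵀ f(x)) ≤ 1`, where
`F` is the `p × p` matrix of rows `f(y)` for the `p` rule settings `y` with `|y|₁ ≤ d`, and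
`ψ(β)` is the diagonal matrix with diagonal entries the intensities `λ(y,β)` of these rule
settings (in the same order).  By the Kiefer–Wolfowitz equivalence theorem, these are
exactly the parameters at which the corner design is D-optimal. -/
theorem corner_design_feasible (k d : ℕ) (hk : 0 < k) (hd : 0 < d) (hdk : d ≤ k)
    (F : Matrix (MonIdx k d) (MonIdx k d) ℝ)
    (hF : F = Matrix.of fun i j => regr k d (cornerPt k d i) j) :
    ∃ β : MonIdx k d → ℝ,
      ∀ x : Fin k → Bool,
        intensity k d β x *
          ((F⁻¹ᵀ *ᵥ regr k d x) ⬝ᵥ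
            (Matrix.diagonal (fun i => (intensity k d β (cornerPt k d i))⁻¹) *ᵥ
              (F⁻¹ᵀ *ᵥ regr k d x))) ≤ 1 := by
  classical
  by_cases hdet : IsUnit F.det
  · -- the genuine case: F is invertible
    set C : (Fin k → Bool) → ℝ := fun x => ∑ S, (F⁻¹ᵀ *ᵥ regr k d x) S ^ 2 with hC
    have hCnonneg : ∀ x, 0 ≤ C x := fun x => Finset.sum_nonneg fun S _ => sq_nonneg _
    obtain ⟨M, hM0, hMC⟩ : ∃ M : ℝ, 0 ≤ M ∧ ∀ x : Fin k → Bool, C x ≤ Real.exp M := by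
      refine ⟨max 0 (Finset.univ.sup' Finset.univ_nonempty fun x => Real.log (C x)),
        le_max_left _ _, fun x => ?_⟩
      rcases eq_or_lt_of_le (hCnonneg x) with h | h
      · rw [← h]; positivity
      · calc C x = Real.exp (Real.log (C x)) := (Real.exp_log h).symm
          _ ≤ _ := Real.exp_le_exp.mpr
            (le_trans (Finset.le_sup' (fun x => Real.log (C x)) (Finset.mem_univ x)) (le_max_right _ _))
    refine ⟨fun _ => -M, fun x => ?_⟩
    by_cases hcard : (CornerAux.supp x).card ≤ d
    · rw [CornerAux.eq_cornerPt x hcard, CornerAux.corner_case F hF hdet]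
    · push_neg at hcard
      set c : MonIdx k d → ℝ := F⁻¹ᵀ *ᵥ regr k d x with hc
      have hexp : ∀ S : MonIdx k d,
          intensity k d (fun _ => -M) x *
            (c S * ((intensity k d (fun _ => -M) (cornerPt k d S))⁻¹ * c S)) ≤
          Real.exp (-M) * c S ^ 2 := by
        intro S
        rw [CornerAux.intensity_const, CornerAux.intensity_const, CornerAux.supp_cornerPt,
          ← Real.exp_neg, neg_neg]
        have hlt := CornerAux.nsub_lt hd S.2 hcard
        have hle : M * (CornerAux.nsub k d S.1 : ℝ) - M * (CornerAux.nsub k d (CornerAux.supp x) : ℝ)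
            ≤ -M := by
          have h1 : (CornerAux.nsub k d S.1 : ℝ) + 1 ≤ (CornerAux.nsub k d (CornerAux.supp x) : ℝ) := by
            exact_mod_cast hlt
          nlinarith
        calc Real.exp (-(M * (CornerAux.nsub k d (CornerAux.supp x) : ℝ))) *
              (c S * (Real.exp (M * (CornerAux.nsub k d S.1 : ℝ)) * c S))
            = Real.exp (M * (CornerAux.nsub k d S.1 : ℝ) -
                M * (CornerAux.nsub k d (CornerAux.supp x) : ℝ)) * c S ^ 2 := by
              rw [Real.exp_sub, Real.exp_neg]
              ring
          _ ≤ Real.exp (-M) * c S ^ 2 :=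
              mul_le_mul_of_nonneg_right (Real.exp_le_exp.mpr hle) (sq_nonneg _)
      calc intensity k d (fun _ => -M) x *
            (c ⬝ᵥ (Matrix.diagonal (fun i => (intensity k d (fun _ => -M) (cornerPt k d i))⁻¹) *ᵥ c))
          = ∑ S, intensity k d (fun _ => -M) x *
              (c S * ((intensity k d (fun _ => -M) (cornerPt k d S))⁻¹ * c S)) := by
            simp only [dotProduct, Matrix.mulVec_diagonal, Finset.mul_sum]
        _ ≤ ∑ S, Real.exp (-M) * c S ^ 2 := Finset.sum_le_sum fun S _ => hexp S
        _ = Real.exp (-M) * C x := by rw [← Finset.mul_sum]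
        _ ≤ Real.exp (-M) * Real.exp M :=
            mul_le_mul_of_nonneg_left (hMC x) (Real.exp_pos _).le
        _ = 1 := by rw [← Real.exp_add]; simp
  · -- degenerate case: Lean's junk value `F⁻¹ = 0` makes the inequality trivial
    refine ⟨0, fun x => ?_⟩
    rw [Matrix.nonsing_inv_apply_not_isUnit F hdet]
    simp [Matrix.zero_mulVec]
end

section
/- There exist no real numbers μ₁, μ₂, μ₃, μ₄ with μ₁ > 0, μ₂ > 0, μ₃ > 0, μ₄ > 0 and μ₃ = μ₄ satisfying simultaneously the eleven inequalities: (1) 4μ₁μ₂μ₃μ₄ + μ₁μ₃ + μ₁μ₂ + 4μ₂μ₃ + μ₄ − 9μ₂μ₃μ₄ ≤ 0; (2) 4μ₁μ₂μ₃μ₄ + μ₂μ₃ + μ₁μ₂ + 4μ₁μ₃ + μ₄ − 9μ₁μ₃μ₄ ≤ 0; (3) 4μ₁μ₂μ₃μ₄ + μ₂μ₃ + μ₁μ₃ + 4μ₁μ₂ + μ₄ − 9μ₁μ₂μ₄ ≤ 0; (4) μ₁μ₂μ₃μ₄ + μ₂μ₃ + μ₁μ₃ + μ₁μ₂ + μ₄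 − 9μ₁μ₂μ₃ ≤ 0; (5) μ₁μ₂μ₃μ₄ + μ₁μ₃ + μ₂μ₃ + 4μ₁μ₂ + 4μ₄ − 9μ₃μ₄ ≤ 0; (6) μ₁μ₂μ₃μ₄ + μ₁μ₂ + 4μ₁μ₃ + μ₂μ₃ + 4μ₄ − 9μ₂μ₄ ≤ 0; (7) μ₁μ₂μ₃μ₄ + μ₁μ₂ + 4μ₂μ₃ + μ₁μ₃ + 4μ₄ − 9μ₁μ₄ ≤ 0; (8) μ₁μ₂μ₃μ₄ + 4μ₁μ₃ + 4μ₂μ₃ + μ₁μ₂ + μ₄ − 9μ₃ ≤ 0; (9) μ₁μ₂μ₃μ₄ + 4μ₁μ₂ + μ₁μ₃ + 4μ₂μ₃ + μ₄ − 9μ₂ ≤ 0; (10) μ₁μ₂μ₃μ₄ + 4μ₁μ₂ + μ₂μ₃ + 4μ₁μ₃ + μ₄ − 9μ₁ ≤ 0; (11) 4μ₁μ₂μ₃μ₄ + μ₁μ₂ + μ₁μ₃ + μ₂μ₃ + 4μ₄ − 9 ≤ 0. -/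
/-- Infeasibility of the benchmark inequality system on the diagonal slice `μ₃ = μ₄`:
there are no positive reals `μ₁, μ₂, μ₃, μ₄` with `μ₃ = μ₄` satisfying simultaneously the
eleven polynomial inequalities arising (via the Kiefer–Wolfowitz equivalence theorem) from
a particular saturated design for the Rasch Poisson counts model with `k = 4` rules and
interaction order `d = 1`. -/
theorem benchmark_system_infeasible_on_diagonal :
    ¬ ∃ μ₁ μ₂ μ₃ μ₄ : ℝ,
      0 < μ₁ ∧ 0 < μ₂ ∧ 0 < μ₃ ∧ 0 < μ₄ ∧ μ₃ = μ₄ ∧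
      4*μ₁*μ₂*μ₃*μ₄ + μ₁*μ₃ + μ₁*μ₂ + 4*μ₂*μ₃ + μ₄ - 9*μ₂*μ₃*μ₄ ≤ 0 ∧
      4*μ₁*μ₂*μ₃*μ₄ + μ₂*μ₃ + μ₁*μ₂ + 4*μ₁*μ₃ + μ₄ - 9*μ₁*μ₃*μ₄ ≤ 0 ∧
      4*μ₁*μ₂*μ₃*μ₄ + μ₂*μ₃ + μ₁*μ₃ + 4*μ₁*μ₂ + μ₄ - 9*μ₁*μ₂*μ₄ ≤ 0 ∧
      μ₁*μ₂*μ₃*μ₄ + μ₂*μ₃ + μ₁*μ₃ + μ₁*μ₂ + μ₄ - 9*μ₁*μ₂*μ₃ ≤ 0 ∧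
      μ₁*μ₂*μ₃*μ₄ + μ₁*μ₃ + μ₂*μ₃ + 4*μ₁*μ₂ + 4*μ₄ - 9*μ₃*μ₄ ≤ 0 ∧
      μ₁*μ₂*μ₃*μ₄ + μ₁*μ₂ + 4*μ₁*μ₃ + μ₂*μ₃ + 4*μ₄ - 9*μ₂*μ₄ ≤ 0 ∧
      μ₁*μ₂*μ₃*μ₄ + μ₁*μ₂ + 4*μ₂*μ₃ + μ₁*μ₃ + 4*μ₄ - 9*μ₁*μ₄ ≤ 0 ∧
      μ₁*μ₂*μ₃*μ₄ + 4*μ₁*μ₃ + 4*μ₂*μ₃ + μ₁*μ₂ + μ₄ - 9*μ₃ ≤ 0 ∧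
      μ₁*μ₂*μ₃*μ₄ + 4*μ₁*μ₂ + μ₁*μ₃ + 4*μ₂*μ₃ + μ₄ - 9*μ₂ ≤ 0 ∧
      μ₁*μ₂*μ₃*μ₄ + 4*μ₁*μ₂ + μ₂*μ₃ + 4*μ₁*μ₃ + μ₄ - 9*μ₁ ≤ 0 ∧
      4*μ₁*μ₂*μ₃*μ₄ + μ₁*μ₂ + μ₁*μ₃ + μ₂*μ₃ + 4*μ₄ - 9 ≤ 0 := by
  rintro ⟨a, b, c, d, ha, hb, hc, hd, hcd, h1, h2, h3, h4, h5, h6, h7, h8, h9, h10, h11⟩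
  subst hcd
  nlinarith [h6, h7, h8, mul_pos ha hb, mul_pos (mul_pos ha hb) (mul_pos hc hc)]
end
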